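/- Let R = ℚ[y,z] and take a₁ = y² + yz + z², b₁ = z − y, a₂ = y² + yz + z², b₂ = y − z in the rank-4 folded Koszul complex (note a₁b₁ + a₂b₂ = 0). Then the even homology ker d⁰/im d¹ vanishes, and the odd homology ker d¹/im d⁰ is generated as an R-module by the class of |01⟩ + |10⟩ and is isomorphic as an R-module to ℚ[y,z]/(y − z, y² + yz + z²), a quotient which is in turn isomorphic as a ℚ-algebra to ℚ[y]/(y²). -/

import Mathlib

set_option synthInstance.maxHeartbeats 1000000
set_option maxHeartbeats 1000000

/-- The differential `d⁰` of the rank-4 folded Koszul complex (tensor product of the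
two-periodic factorizations `(a₁,b₁)` and `(a₂,b₂)`), from the even part (free on
`|00⟩, |11⟩`, an element `(x, y)` standing for `x|00⟩ + y|11⟩`) to the odd part
(free on `|01⟩, |10⟩`, an element `(u, v)` standing for `u|01⟩ + v|10⟩`):
`d⁰(|00⟩) = a₁|10⟩ + a₂|01⟩`, `d⁰(|11⟩) = b₂|10⟩ − b₁|01⟩`. -/
noncomputable def rank4d0 {R : Type*} [CommRing R] (a₁ b₁ a₂ b₂ : R) :
    (R × R) →ₗ[R] (R × R) where
  toFun p := (a₂ * p.1 - b₁ * p.2, a₁ * p.1 + b₂ * p.2)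
  map_add' p q := by
    ext <;> simp <;> ring
  map_smul' r p := by
    ext <;> simp <;> ring

/-- The differential `d¹` of the rank-4 folded Koszul complex, from the odd part to the
even part: `d¹(|01⟩) = b₂|00⟩ − a₁|11⟩`, `d¹(|10⟩) = b₁|00⟩ + a₂|11⟩`. -/
noncomputable def rank4d1 {R : Type*} [CommRing R] (a₁ b₁ a₂ b₂ : R) :
    (R × R) →ₗ[R] (R × R) where
  toFun p := (b₂ * p.1 + b₁ * p.2, -(a₁ * p.1) + a₂ * p.2)
  map_add' p q := by
    ext <;> simp <;> ring
  map_smul' r p := by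
    ext <;> simp <;> ring

/-- The even homology `ker d⁰ / im d¹` of the rank-4 folded Koszul complex. -/
noncomputable abbrev rank4EvenHomology {R : Type*} [CommRing R] (a₁ b₁ a₂ b₂ : R) :=
  LinearMap.ker (rank4d0 a₁ b₁ a₂ b₂) ⧸
    ((LinearMap.range (rank4d1 a₁ b₁ a₂ b₂)).comap
      (LinearMap.ker (rank4d0 a₁ b₁ a₂ b₂)).subtype)

/-- The odd homology `ker d¹ / im d⁰` of the rank-4 folded Koszul complex. -/
noncomputable abbrev rank4OddHomology {R : Type*} [CommRing R] (a₁ b₁ a₂ b₂ : R) :=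
  LinearMap.ker (rank4d1 a₁ b₁ a₂ b₂) ⧸
    ((LinearMap.range (rank4d0 a₁ b₁ a₂ b₂)).comap
      (LinearMap.ker (rank4d1 a₁ b₁ a₂ b₂)).subtype)


open MvPolynomial in
/-- Substitution `z := y` on `ℚ[y,z]`. -/
noncomputable def sigmaR : MvPolynomial (Fin 2) ℚ →ₐ[ℚ] MvPolynomial (Fin 2) ℚ :=
  aeval (fun _ => X 0)

open MvPolynomial in
lemma sigmaR_dvd (p : MvPolynomial (Fin 2) ℚ) :
    (X 0 - X 1 : MvPolynomial (Fin 2) ℚ) ∣ (p - sigmaR p) := by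
  induction p using MvPolynomial.induction_on with
  | C a => simp [sigmaR]
  | add p q hp hq =>
      have : p + q - sigmaR (p + q) = (p - sigmaR p) + (q - sigmaR q) := by
        simp [map_add]; ring
      rw [this]; exact dvd_add hp hq
  | mul_X p i hp =>
      have h2 : (X 0 - X 1 : MvPolynomial (Fin 2) ℚ) ∣ (X i - X 0) := by
        obtain rfl | rfl : i = 0 ∨ i = 1 := by omega
        · simp
        · exact ⟨-1, by ring⟩
      have : p * X i - sigmaR (p * X i)
          = X i * (p - sigmaR p) + sigmaR p * (X i - X 0) := by
        simp [sigmaR, map_mul]; ring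
      rw [this]
      exact dvd_add (hp.mul_left _) (h2.mul_left _)

open MvPolynomial in
lemma sigmaR_X0 : sigmaR (X 0 : MvPolynomial (Fin 2) ℚ) = X 0 := by simp [sigmaR]
open MvPolynomial in
lemma sigmaR_X1 : sigmaR (X 1 : MvPolynomial (Fin 2) ℚ) = X 0 := by simp [sigmaR]

open MvPolynomial in
lemma threeX0sq_ne_zero : (3 : MvPolynomial (Fin 2) ℚ) * X 0 ^ 2 ≠ 0 := by
  have h3 : (3 : MvPolynomial (Fin 2) ℚ) ≠ 0 := by norm_num
  exact mul_ne_zero h3 (pow_ne_zero _ (X_ne_zero 0))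

open MvPolynomial in
lemma F_ne_zero : (X 0 ^ 2 + X 0 * X 1 + X 1 ^ 2 : MvPolynomial (Fin 2) ℚ) ≠ 0 := by
  intro h
  have := congrArg sigmaR h
  simp only [map_add, map_mul, map_pow, sigmaR_X0, sigmaR_X1, map_zero] at this
  apply threeX0sq_ne_zero
  rw [← this]; ring

open MvPolynomial in
lemma X01_ne_zero : (X 0 - X 1 : MvPolynomial (Fin 2) ℚ) ≠ 0 :=
  sub_ne_zero.2 (fun h => by simpa using (MvPolynomial.X_injective h : (0:Fin 2) = 1))

open MvPolynomial

/-- For `R = ℚ[y,z]` and the rank-4 folded Koszul complex with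
`a₁ = y² + yz + z²`, `b₁ = z − y`, `a₂ = y² + yz + z²`, `b₂ = y − z` (so
`a₁b₁ + a₂b₂ = 0`): the even homology `ker d⁰/im d¹` vanishes, and the odd homology
`ker d¹/im d⁰` is generated as an `R`-module by the class of `|01⟩ + |10⟩` and is
isomorphic as an `R`-module to `ℚ[y,z]/(y − z, y² + yz + z²)`, a quotient which is in
turn isomorphic as a `ℚ`-algebra to `ℚ[y]/(y²)`. -/
theorem homology_of_J0 (y z : MvPolynomial (Fin 2) ℚ)
    (hy : y = MvPolynomial.X 0) (hz : z = MvPolynomial.X 1) :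
    ((y ^ 2 + y * z + z ^ 2) * (z - y) + (y ^ 2 + y * z + z ^ 2) * (y - z) = 0) ∧
    Subsingleton (rank4EvenHomology (y ^ 2 + y * z + z ^ 2) (z - y)
      (y ^ 2 + y * z + z ^ 2) (y - z)) ∧
    (∃ h : ((1, 1) : MvPolynomial (Fin 2) ℚ × MvPolynomial (Fin 2) ℚ) ∈
        LinearMap.ker (rank4d1 (y ^ 2 + y * z + z ^ 2) (z - y)
          (y ^ 2 + y * z + z ^ 2) (y - z)),
      Submodule.span (MvPolynomial (Fin 2) ℚ)
          {(Submodule.Quotient.mk ⟨_, h⟩ :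
            rank4OddHomology (y ^ 2 + y * z + z ^ 2) (z - y)
              (y ^ 2 + y * z + z ^ 2) (y - z))} = ⊤ ∧
      Nonempty (rank4OddHomology (y ^ 2 + y * z + z ^ 2) (z - y)
            (y ^ 2 + y * z + z ^ 2) (y - z)
          ≃ₗ[MvPolynomial (Fin 2) ℚ]
        (MvPolynomial (Fin 2) ℚ ⧸ Ideal.span {y - z, y ^ 2 + y * z + z ^ 2}))) ∧
    Nonempty ((MvPolynomial (Fin 2) ℚ ⧸ Ideal.span {y - z, y ^ 2 + y * z + z ^ 2})
        ≃ₐ[ℚ] (Polynomial ℚ ⧸ Ideal.span {(Polynomial.X : Polynomial ℚ) ^ 2})) := by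
  subst hy hz
  set R := MvPolynomial (Fin 2) ℚ
  set f : R := X 0 ^ 2 + X 0 * X 1 + X 1 ^ 2 with hfdef
  have hf : f ≠ 0 := F_ne_zero
  have hd : (X 0 - X 1 : R) ≠ 0 := X01_ne_zero
  refine ⟨by ring, ?_, ?_, ?_⟩
  · -- even homology vanishes
    rw [Submodule.Quotient.subsingleton_iff, eq_top_iff]
    rintro ⟨⟨x, w⟩, hp⟩ -
    simp only [LinearMap.mem_ker, rank4d0, LinearMap.coe_mk, AddHom.coe_mk,
      Prod.mk_eq_zero] at hp
    obtain ⟨h1, h2⟩ := hp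
    -- h2 : f * x + (X 0 - X 1) * w = 0
    have hσf : sigmaR f = 3 * X 0 ^ 2 := by
      rw [hfdef]
      simp only [map_add, map_mul, map_pow, sigmaR_X0, sigmaR_X1]
      ring
    have hσx : sigmaR x = 0 := by
      have hh := congrArg sigmaR h2
      simp only [map_add, map_mul, map_sub, map_pow, sigmaR_X0, sigmaR_X1, map_zero,
        sub_self, zero_mul, add_zero, hσf] at hh
      have : (3 * X 0 ^ 2 : R) * sigmaR x = 0 := by rw [← hh]
      rcases mul_eq_zero.1 this with h | h
      · exact absurd h threeX0sq_ne_zero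
      · exact h
    obtain ⟨t, ht⟩ : (X 0 - X 1 : R) ∣ x := by
      have := sigmaR_dvd x
      rwa [hσx, sub_zero] at this
    have hw : w = -(f * t) := by
      have : (X 0 - X 1 : R) * (w + f * t) = 0 := by
        rw [ht] at h2; linear_combination h2
      rcases mul_eq_zero.1 this with h | h
      · exact absurd h hd
      · linear_combination h
    refine Submodule.mem_comap.2 ⟨(t, 0), ?_⟩
    simp only [rank4d1, LinearMap.coe_mk, AddHom.coe_mk, Submodule.coe_subtype]
    rw [Prod.mk.injEq]
    exact ⟨by rw [ht]; ring, by rw [hw]; ring⟩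
  · -- odd homology
    have hmem : ((1, 1) : R × R) ∈
        LinearMap.ker (rank4d1 (X 0 ^ 2 + X 0 * X 1 + X 1 ^ 2) (X 1 - X 0)
          (X 0 ^ 2 + X 0 * X 1 + X 1 ^ 2) (X 0 - X 1)) := by
      simp only [LinearMap.mem_ker, rank4d1, LinearMap.coe_mk, AddHom.coe_mk,
        Prod.mk_eq_zero]
      exact ⟨by ring, by ring⟩
    refine ⟨hmem, ?_, ?_⟩
    · -- span = ⊤
      rw [Submodule.eq_top_iff']
      intro c
      obtain ⟨q, rfl⟩ := Submodule.Quotient.mk_surjective _ c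
      have hq := q.2
      simp only [LinearMap.mem_ker, rank4d1, LinearMap.coe_mk, AddHom.coe_mk,
        Prod.mk_eq_zero] at hq
      have hvu : q.1.2 = q.1.1 := by
        have : f * (q.1.2 - q.1.1) = 0 := by linear_combination hq.2
        rcases mul_eq_zero.1 this with h | h
        · exact absurd h hf
        · linear_combination h
      have hqe : q = q.1.1 • ⟨(1, 1), hmem⟩ := by
        apply Subtype.ext
        have : (q.1.1 • ((1 : R), (1 : R))) = (q.1.1, q.1.1) := by
          rw [Prod.smul_mk]
          simp
        rw [Submodule.coe_smul, this, Prod.mk.injEq]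
        exact ⟨rfl, hvu⟩
      rw [hqe, Submodule.Quotient.mk_smul]
      exact Submodule.smul_mem _ _ (Submodule.mem_span_singleton_self _)
    · -- iso to R/(y-z, f)
      set I : Ideal R := Ideal.span {X 0 - X 1, f} with hI
      set g : LinearMap.ker (rank4d1 (X 0 ^ 2 + X 0 * X 1 + X 1 ^ 2) (X 1 - X 0)
            (X 0 ^ 2 + X 0 * X 1 + X 1 ^ 2) (X 0 - X 1)) →ₗ[R] R ⧸ I :=
        I.mkQ ∘ₗ (LinearMap.fst R R R) ∘ₗ (Submodule.subtype _) with hg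
      have hsurj : Function.Surjective g := by
        intro c
        obtain ⟨u, rfl⟩ := Submodule.Quotient.mk_surjective _ c
        refine ⟨⟨(u, u), ?_⟩, rfl⟩
        simp only [LinearMap.mem_ker, rank4d1, LinearMap.coe_mk, AddHom.coe_mk,
          Prod.mk_eq_zero]
        exact ⟨by ring, by ring⟩
      have hker : ((LinearMap.range (rank4d0 (X 0 ^ 2 + X 0 * X 1 + X 1 ^ 2) (X 1 - X 0)
            (X 0 ^ 2 + X 0 * X 1 + X 1 ^ 2) (X 0 - X 1))).comap
            (LinearMap.ker (rank4d1 (X 0 ^ 2 + X 0 * X 1 + X 1 ^ 2) (X 1 - X 0)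
              (X 0 ^ 2 + X 0 * X 1 + X 1 ^ 2) (X 0 - X 1))).subtype) = LinearMap.ker g := by
        ext ⟨⟨u, v⟩, hm⟩
        have hvu : v = u := by
          simp only [LinearMap.mem_ker, rank4d1, LinearMap.coe_mk, AddHom.coe_mk,
            Prod.mk_eq_zero] at hm
          have : f * (v - u) = 0 := by linear_combination hm.2
          rcases mul_eq_zero.1 this with h | h
          · exact absurd h hf
          · linear_combination h
        subst hvu
        simp only [Submodule.mem_comap, Submodule.coe_subtype, LinearMap.mem_range,
          LinearMap.mem_ker, hg, LinearMap.coe_comp, Function.comp_apply,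
          LinearMap.fst_apply, Submodule.mkQ_apply, Submodule.Quotient.mk_eq_zero,
          rank4d0, LinearMap.coe_mk, AddHom.coe_mk]
        constructor
        · rintro ⟨⟨a, b⟩, hab⟩
          simp only [Prod.mk.injEq] at hab
          refine Ideal.mem_span_pair.2 ⟨b, a, ?_⟩
          linear_combination hab.1
        · intro hu
          obtain ⟨a, b, hab⟩ := Ideal.mem_span_pair.1 hu
          refine ⟨(b, a), ?_⟩
          rw [Prod.mk.injEq]
          exact ⟨by linear_combination hab, by linear_combination hab⟩
      exact ⟨(Submodule.quotEquivOfEq _ _ hker).trans (g.quotKerEquivOfSurjective hsurj)⟩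
  · -- algebra iso to ℚ[X]/(X²)
    set I : Ideal R := Ideal.span {X 0 - X 1, f} with hI
    set J : Ideal (Polynomial ℚ) := Ideal.span {(Polynomial.X : Polynomial ℚ) ^ 2} with hJ
    have hX2 : (Ideal.Quotient.mk J) (Polynomial.X ^ 2) = 0 :=
      Ideal.Quotient.eq_zero_iff_mem.2 (Ideal.subset_span rfl)
    have hy2 : (X 0 : R) ^ 2 ∈ I := by
      have h3 : (3 : R) * X 0 ^ 2 ∈ I :=
        Ideal.mem_span_pair.2 ⟨2 * X 0 + X 1, 1, by ring⟩
      have := I.smul_mem (C (1/3 : ℚ)) h3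
      have h31 : (C (1/3 : ℚ) : R) * 3 = 1 := by
        rw [show (3 : R) = C (3 : ℚ) from (map_ofNat (C : ℚ →+* R) 3).symm, ← C_mul]
        norm_num
      rwa [smul_eq_mul, ← mul_assoc, h31, one_mul] at this
    set φ : R →ₐ[ℚ] Polynomial ℚ ⧸ J :=
      aeval (fun _ : Fin 2 => (Ideal.Quotient.mk J) Polynomial.X) with hφ
    have hφI : ∀ a ∈ I, φ a = 0 := by
      intro a ha
      obtain ⟨c₁, c₂, hc⟩ := Ideal.mem_span_pair.1 ha
      have e1 : φ (X 0 - X 1) = 0 := by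
        rw [hφ, map_sub, aeval_X, aeval_X, sub_self]
      have e2 : φ f = 0 := by
        have : φ f = 3 * ((Ideal.Quotient.mk J) Polynomial.X) ^ 2 := by
          rw [hφ, hfdef, map_add, map_add, map_mul, map_pow, map_pow,
            aeval_X, aeval_X]
          ring
        rw [this, show ((Ideal.Quotient.mk J) Polynomial.X) ^ 2
          = (Ideal.Quotient.mk J) (Polynomial.X ^ 2) by rw [map_pow], hX2, mul_zero]
      calc φ a = φ (c₁ * (X 0 - X 1) + c₂ * f) := by rw [hc]
        _ = φ c₁ * φ (X 0 - X 1) + φ c₂ * φ f := by rw [map_add, map_mul, map_mul]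
        _ = 0 := by rw [e1, e2, mul_zero, mul_zero, add_zero]
    set ψ : Polynomial ℚ →ₐ[ℚ] R ⧸ I :=
      Polynomial.aeval ((Ideal.Quotient.mk I) (X 0)) with hψ
    have hψJ : ∀ a ∈ J, ψ a = 0 := by
      intro a ha
      obtain ⟨c, hc⟩ := Ideal.mem_span_singleton'.1 ha
      have e : ψ (Polynomial.X ^ 2) = 0 := by
        rw [map_pow, hψ, Polynomial.aeval_X, ← map_pow]
        exact Ideal.Quotient.eq_zero_iff_mem.2 hy2
      rw [← hc, map_mul, e, mul_zero]
    set F : R ⧸ I →ₐ[ℚ] Polynomial ℚ ⧸ J := Ideal.Quotient.liftₐ I φ hφI with hF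
    set G : Polynomial ℚ ⧸ J →ₐ[ℚ] R ⧸ I := Ideal.Quotient.liftₐ J ψ hψJ with hG
    have hFmk : ∀ a, F ((Ideal.Quotient.mk I) a) = φ a := fun a =>
      Ideal.Quotient.liftₐ_apply I φ hφI _
    have hGmk : ∀ a, G ((Ideal.Quotient.mk J) a) = ψ a := fun a =>
      Ideal.Quotient.liftₐ_apply J ψ hψJ _
    refine ⟨AlgEquiv.ofAlgHom F G ?_ ?_⟩
    · apply Ideal.Quotient.algHom_ext
      apply Polynomial.algHom_ext
      simp only [AlgHom.coe_comp, Function.comp_apply, Ideal.Quotient.mkₐ_eq_mk,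
        AlgHom.coe_id, id_eq]
      rw [hGmk, hψ, Polynomial.aeval_X, hFmk, hφ, aeval_X]
    · apply Ideal.Quotient.algHom_ext
      apply MvPolynomial.algHom_ext
      intro i
      simp only [AlgHom.coe_comp, Function.comp_apply, Ideal.Quotient.mkₐ_eq_mk,
        AlgHom.coe_id, id_eq]
      rw [hFmk, hφ, aeval_X, hGmk, hψ, Polynomial.aeval_X]
      obtain rfl | rfl : i = 0 ∨ i = 1 := by omega
      · rfl
      · rw [Ideal.Quotient.mk_eq_mk_iff_sub_mem]
        exact Ideal.subset_span (Set.mem_insert _ _)
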